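/- Let γ(u) = [[u², u],[u, 1]] be the parabolic circle in ℚ³₊, so that γ̇(u) = [[2u, 1],[1, 0]] and ⟨γ̇(u), γ̇(u)⟩ = 1. Fix u ∈ ℝ. Then a Hermitian matrix V satisfies ⟨γ(u), V⟩ = 0, ⟨γ̇(u), V⟩ = 0 and ⟨V, V⟩ = 1 if and only if there exists α ∈ ℝ such that V = α·γ(u) + f₂ or V = α·γ(u) − f₂, where f₂ = [[0, i],[−i, 0]]. -/

import Mathlib

open Matrix

/-- The Lorentz inner product on 2×2 complex matrices, via determinant polarization. -/
noncomputable def ip (V W : Matrix (Fin 2) (Fin 2) ℂ) : ℂ :=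
  -(1 / 2) * ((V + W).det - V.det - W.det)

/-- The parabolic circle in the light cone. -/
noncomputable def γP (u : ℝ) : Matrix (Fin 2) (Fin 2) ℂ :=
  !![((u : ℂ)) ^ 2, (u : ℂ); (u : ℂ), 1]

/-- Its derivative. -/
noncomputable def γPdot (u : ℝ) : Matrix (Fin 2) (Fin 2) ℂ :=
  !![2 * (u : ℂ), 1; 1, 0]

/-- f₂ = [[0,i],[−i,0]]. -/
noncomputable def f2 : Matrix (Fin 2) (Fin 2) ℂ := !![0, Complex.I; -Complex.I, 0]

theorem parabolic_circle_tangent_fields (u : ℝ) :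
    (∀ i j : Fin 2, HasDerivAt (fun u' => γP u' i j) (γPdot u i j) u) ∧
    ip (γPdot u) (γPdot u) = 1 ∧
    ∀ V : Matrix (Fin 2) (Fin 2) ℂ,
      (V.IsHermitian ∧ ip (γP u) V = 0 ∧ ip (γPdot u) V = 0 ∧ ip V V = 1)
      ↔ ∃ α : ℝ, V = (α : ℂ) • γP u + f2 ∨ V = (α : ℂ) • γP u - f2 := by
  have ho : HasDerivAt (fun u' : ℝ => ((u' : ℝ) : ℂ)) 1 u := by
    simpa using (hasDerivAt_id u).ofReal_comp
  refine ⟨?_, ?_, ?_⟩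
  · intro i j
    fin_cases i <;> fin_cases j <;> simp only [γP, γPdot, Matrix.cons_val_zero,
      Matrix.cons_val_one, Matrix.head_cons, Matrix.head_fin_const, Fin.mk_zero, Fin.mk_one,
      Matrix.cons_val', Matrix.empty_val', Matrix.cons_val_fin_one]
    · have hm := ho.fun_mul ho
      simpa [pow_two, two_mul] using hm
    · exact ho
    · exact ho
    · exact hasDerivAt_const u 1
  · simp [ip, γPdot, Matrix.det_fin_two, Matrix.add_apply]
    ring
  · intro V
    constructor
    · rintro ⟨hH, h1, h2, h3⟩
      obtain ⟨a, d, p, q, hV⟩ : ∃ a d p q : ℝ,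
          V = !![(a : ℂ), (p : ℂ) + (q : ℂ) * Complex.I;
                 (p : ℂ) - (q : ℂ) * Complex.I, (d : ℂ)] := by
        refine ⟨(V 0 0).re, (V 1 1).re, (V 0 1).re, (V 0 1).im, ?_⟩
        have ha := hH.apply 0 0
        have hd := hH.apply 1 1
        have hb := hH.apply 1 0
        ext i j
        fin_cases i <;> fin_cases j <;>
          simp only [Matrix.cons_val_zero, Matrix.cons_val_one, Matrix.head_cons, Fin.mk_zero,
            Fin.mk_one, Matrix.cons_val', Matrix.empty_val', Matrix.cons_val_fin_one,
            Matrix.head_fin_const]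
        · exact (Complex.conj_eq_iff_re.mp ha).symm
        · exact (Complex.re_add_im _).symm
        · rw [← hb]
          apply Complex.ext <;> simp
        · exact (Complex.conj_eq_iff_re.mp hd).symm
      subst hV
      simp [ip, γP, γPdot, Matrix.det_fin_two, Matrix.add_apply, -Complex.ofReal_pow]
        at h1 h2 h3
      have hA : (p : ℂ) = (u : ℂ) * d := by linear_combination (-1/2 : ℂ) * h2
      have hB : (a : ℂ) = (u : ℂ) ^ 2 * d := by linear_combination h1 - (u : ℂ) * h2
      have hq : (q : ℂ) ^ 2 = 1 := by
        linear_combination h3 + (q : ℂ) ^ 2 * Complex.I_sq - ((p : ℂ) + (u : ℂ) * d) * hA +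
          (d : ℂ) * hB
      have pA : p = u * d := by exact_mod_cast hA
      have pB : a = u ^ 2 * d := by exact_mod_cast hB
      have pq : q ^ 2 = 1 := by exact_mod_cast hq
      subst pA; subst pB
      refine ⟨d, ?_⟩
      rcases mul_eq_zero.mp (show (q - 1) * (q + 1) = 0 by nlinarith [pq]) with h | h
      · left
        have : q = 1 := by linarith
        subst this
        ext i j
        fin_cases i <;> fin_cases j <;>
          simp [γP, f2, Matrix.add_apply, Matrix.smul_apply] <;> ring
      · right
        have : q = -1 := by linarith
        subst this
        ext i j
        fin_cases i <;> fin_cases j <;>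
          simp [γP, f2, Matrix.sub_apply, Matrix.smul_apply] <;> ring
    · rintro ⟨α, hα | hα⟩ <;> subst hα <;> refine ⟨?_, ?_, ?_, ?_⟩
      · ext i j; fin_cases i <;> fin_cases j <;>
          simp [Matrix.conjTranspose_apply, γP, f2, Complex.conj_ofReal, sub_eq_add_neg, map_pow]
      · simp [ip, γP, f2, Matrix.det_fin_two, Matrix.add_apply, Matrix.smul_apply]; ring_nf
        try simp [Complex.I_sq]
        try ring
      · simp [ip, γP, γPdot, f2, Matrix.det_fin_two, Matrix.add_apply, Matrix.smul_apply]; ring_nf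
        try simp [Complex.I_sq]
        try ring
      · simp [ip, γP, f2, Matrix.det_fin_two, Matrix.add_apply, Matrix.smul_apply]; ring_nf
        try simp [Complex.I_sq]
        try ring
      · ext i j; fin_cases i <;> fin_cases j <;>
          simp [Matrix.conjTranspose_apply, γP, f2, Complex.conj_ofReal, sub_eq_add_neg, map_pow]
      · simp [ip, γP, f2, Matrix.det_fin_two, Matrix.sub_apply, Matrix.add_apply,
          Matrix.smul_apply]; ring_nf
        try simp [Complex.I_sq]
        try ring
      · simp [ip, γP, γPdot, f2, Matrix.det_fin_two, Matrix.sub_apply, Matrix.add_apply,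
          Matrix.smul_apply]; ring_nf
        try simp [Complex.I_sq]
        try ring
      · simp [ip, γP, f2, Matrix.det_fin_two, Matrix.sub_apply, Matrix.add_apply,
          Matrix.smul_apply]; ring_nf
        try simp [Complex.I_sq]
        try ring
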